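/- Let k ≥ 1, let γ_1, …, γ_k be complex numbers such that for all indices 1 ≤ a ≤ b ≤ k the consecutive sum Σ_{i=a}^{b} γ_i is nonzero, and let t ∈ ℝ. Then the iterated time-ordered integral ∫_0^t dt_1 ∫_0^{t_1} dt_2 ⋯ ∫_0^{t_{k−1}} dt_k exp(−Σ_{j=1}^{k} γ_j t_j) equals 1/(∏_{n=1}^{k} Σ_{j=1}^{n} γ_j) + Σ_{p=1}^{k} (−1)^p exp(−t Σ_{i=1}^{p} γ_i) / [(∏_{m=1}^{p} Σ_{i=m}^{p} γ_i)·(∏_{n=p+1}^{k} Σ_{j=p+1}^{n} γ_j)], where empty products equal 1. -/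

import Mathlib

open MeasureTheory

/-- The nested (iterated) time-ordered integral
`∫_0^t dt_1 ∫_0^{t_1} dt_2 ⋯ ∫_0^{t_{k-1}} dt_k exp(-Σ_j γ_j t_j)`,
written as nested one-dimensional integrals (the exponential factorizes). -/
noncomputable def nestedInt : List ℂ → ℝ → ℂ
  | [], _ => 1
  | g :: gs, t => ∫ s in (0:ℝ)..t, Complex.exp (-g * (s : ℂ)) * nestedInt gs s


open Polynomial in
lemma sum_nodalWeight_eq_zero {F : Type*} [Field F] {ι : Type*} [DecidableEq ι]
    (s : Finset ι) (v : ι → F) (hvs : Set.InjOn v s) (hs : 2 ≤ s.card) :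
    ∑ i ∈ s, ∏ j ∈ s.erase i, (v i - v j)⁻¹ = 0 := by
  have h1 : ∑ i ∈ s, Lagrange.basis s v i = 1 :=
    Lagrange.sum_basis hvs (Finset.card_pos.mp (by omega))
  have h2 := congrArg (fun p : F[X] => p.coeff (s.card - 1)) h1
  simp only [Polynomial.finset_sum_coeff, Polynomial.coeff_one] at h2
  rw [if_neg (by omega)] at h2
  rw [← h2]
  refine (Finset.sum_congr rfl fun i hi => ?_).symm
  rw [Lagrange.basis_eq_prod_sub_inv_mul_nodal_div hi,
    ← Lagrange.nodal_erase_eq_nodal_div hi, Polynomial.coeff_C_mul]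
  have hd : (Lagrange.nodal (s.erase i) v).natDegree = s.card - 1 := by
    rw [Lagrange.natDegree_nodal, Finset.card_erase_of_mem hi]
  rw [show s.card - 1 = (Lagrange.nodal (s.erase i) v).natDegree from hd.symm,
    (Lagrange.nodal_monic).coeff_natDegree, mul_one, Lagrange.nodalWeight]

/-- `Wt x k q = ∏_{m<q} (x q - x m) * ∏_{q<n≤k} (x n - x q)`. -/
noncomputable def Wt (x : ℕ → ℂ) (k q : ℕ) : ℂ :=
  (∏ m ∈ Finset.range q, (x q - x m)) * ∏ n ∈ Finset.Icc (q+1) k, (x n - x q)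

lemma neg_one_pow_congr' {i j : ℕ} (h : i % 2 = j % 2) : (-1:ℂ)^i = (-1)^j := by
  conv_lhs => rw [← Nat.div_add_mod i 2]
  conv_rhs => rw [← Nat.div_add_mod j 2]
  rw [pow_add, pow_add, pow_mul, pow_mul, h]
  norm_num

lemma star (x : ℕ → ℂ) (k : ℕ) (hk : 1 ≤ k)
    (hx : ∀ m q, m < q → q ≤ k → x q ≠ x m) :
    ∑ q ∈ Finset.Icc 1 k, (-1:ℂ)^(q+1) * (Wt x k q)⁻¹
      = (∏ n ∈ Finset.Icc 1 k, (x n - x 0))⁻¹ := by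
  have hinj : Set.InjOn x (Finset.range (k+1)) := by
    intro i hi j hj hij
    simp only [Finset.coe_range, Set.mem_Iio] at hi hj
    rcases Nat.lt_trichotomy i j with h | h | h
    · exact absurd hij.symm (hx i j h (by omega))
    · exact h
    · exact absurd hij (hx j i h (by omega))
  have h0 := sum_nodalWeight_eq_zero (Finset.range (k+1)) x hinj (by simp; omega)
  have hsplit : Finset.range (k+1) = insert 0 (Finset.Icc 1 k) := by
    ext i
    simp only [Finset.mem_range, Finset.mem_insert, Finset.mem_Icc]
    omega
  rw [hsplit, Finset.sum_insert (by simp)] at h0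
  have herase0 : (insert 0 (Finset.Icc 1 k)).erase 0 = Finset.Icc 1 k := by
    ext i
    simp only [Finset.mem_erase, Finset.mem_insert, Finset.mem_Icc]
    omega
  rw [herase0] at h0
  -- the i = 0 term
  have hA : ∏ j ∈ Finset.Icc 1 k, (x 0 - x j)⁻¹
      = (-1:ℂ)^k * ∏ j ∈ Finset.Icc 1 k, (x j - x 0)⁻¹ := by
    rw [show ((-1:ℂ)^k) = ∏ _j ∈ Finset.Icc 1 k, (-1:ℂ) by
        rw [Finset.prod_const, Nat.card_Icc]; norm_num,
      ← Finset.prod_mul_distrib]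
    refine Finset.prod_congr rfl fun j hj => ?_
    rw [show x 0 - x j = -(x j - x 0) by ring, inv_neg]
    ring
  -- the i = q ≥ 1 terms
  have hB : ∀ q ∈ Finset.Icc 1 k,
      ∏ j ∈ (insert 0 (Finset.Icc 1 k)).erase q, (x q - x j)⁻¹
        = (-1:ℂ)^(k-q) * (Wt x k q)⁻¹ := by
    intro q hq
    simp only [Finset.mem_Icc] at hq
    have hset : (insert 0 (Finset.Icc 1 k)).erase q
        = Finset.range q ∪ Finset.Icc (q+1) k := by
      ext i
      simp [Finset.mem_union, Finset.mem_range, Finset.mem_Icc]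
      omega
    have hdisj : Disjoint (Finset.range q) (Finset.Icc (q+1) k) := by
      rw [Finset.disjoint_left]
      intro i hi hi'
      simp [Finset.mem_range] at hi
      simp [Finset.mem_Icc] at hi'
      omega
    rw [hset, Finset.prod_union hdisj, Wt, mul_inv, ← Finset.prod_inv_distrib,
      ← Finset.prod_inv_distrib]
    rw [show ∏ n ∈ Finset.Icc (q+1) k, (x q - x n)⁻¹
        = (-1:ℂ)^(k-q) * ∏ n ∈ Finset.Icc (q+1) k, (x n - x q)⁻¹ by
      rw [show ((-1:ℂ)^(k-q)) = ∏ _j ∈ Finset.Icc (q+1) k, (-1:ℂ) by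
          rw [Finset.prod_const, Nat.card_Icc]; congr 1; omega,
        ← Finset.prod_mul_distrib]
      refine Finset.prod_congr rfl fun j hj => ?_
      rw [show x q - x j = -(x j - x q) by ring, inv_neg]
      ring]
    ring
  rw [Finset.sum_congr rfl hB, hA] at h0
  rw [← Finset.prod_inv_distrib]
  have h1 : ∑ q ∈ Finset.Icc 1 k, (-1:ℂ)^(k-q) * (Wt x k q)⁻¹
      = -((-1:ℂ)^k * ∏ j ∈ Finset.Icc 1 k, (x j - x 0)⁻¹) := by linear_combination h0
  calc ∑ q ∈ Finset.Icc 1 k, (-1:ℂ)^(q+1) * (Wt x k q)⁻¹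
      = (-1:ℂ)^(k+1) * ∑ q ∈ Finset.Icc 1 k, (-1:ℂ)^(k-q) * (Wt x k q)⁻¹ := by
        rw [Finset.mul_sum]
        refine Finset.sum_congr rfl fun q hq => ?_
        simp only [Finset.mem_Icc] at hq
        rw [← mul_assoc, ← pow_add, neg_one_pow_congr' (i := q+1) (j := k+1+(k-q)) (by omega)]
    _ = (∏ j ∈ Finset.Icc 1 k, (x j - x 0)⁻¹) := by
        rw [h1]
        ring_nf
        rw [show k*2 = 2*k by ring, pow_mul]
        norm_num
        exact Finset.prod_congr rfl fun _ _ => by ring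

lemma Icc_shift_prod (f : ℕ → ℂ) (a b : ℕ) :
    ∏ n ∈ Finset.Icc (a+1) (b+1), f n = ∏ n ∈ Finset.Icc a b, f (n+1) := by
  rw [← Finset.map_add_right_Icc a b 1, Finset.prod_map]
  rfl

lemma Icc_shift_sum (f : ℕ → ℂ) (a b : ℕ) :
    ∑ n ∈ Finset.Icc (a+1) (b+1), f n = ∑ n ∈ Finset.Icc a b, f (n+1) := by
  rw [← Finset.map_add_right_Icc a b 1, Finset.sum_map]
  rfl

lemma step (K : ℕ) (a : ℂ) (x : ℕ → ℂ) (hx0 : x 0 = 0) (hx1 : x 1 = a)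
    (hxne : ∀ m q, m < q → q ≤ K + 1 → x q ≠ x m) (t : ℝ) :
    (∫ s in (0:ℝ)..t, Complex.exp (-a * s) *
      ((∏ n ∈ Finset.Icc 1 K, (x (n+1) - a))⁻¹ +
        ∑ q ∈ Finset.Icc 1 K, (-1:ℂ)^q * Complex.exp (-(s:ℂ) * (x (q+1) - a)) /
          Wt (fun p => x (p+1) - a) K q))
    = (∏ n ∈ Finset.Icc 1 (K+1), x n)⁻¹ +
      ∑ q ∈ Finset.Icc 1 (K+1), (-1:ℂ)^q * Complex.exp (-(t:ℂ) * x q) / Wt x (K+1) q := by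
  -- basic nonvanishing facts
  have ha : a ≠ 0 := by
    rw [← hx1]
    intro h
    exact hxne 0 1 Nat.zero_lt_one (by omega) (by rw [h, hx0])
  have hxq : ∀ q, q ≤ K → x (q+1) ≠ 0 := by
    intro q hq h
    exact hxne 0 (q+1) (by omega) (by omega) (by rw [h, hx0])
  have hyne : ∀ m q, m < q → q ≤ K → (x (q+1) - a) - (x (m+1) - a) ≠ 0 := by
    intro m q h hq
    rw [show (x (q+1) - a) - (x (m+1) - a) = x (q+1) - x (m+1) by ring]
    exact sub_ne_zero_of_ne (hxne (m+1) (q+1) (by omega) (by omega))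
  have hWyne : ∀ q, 1 ≤ q → q ≤ K → Wt (fun p => x (p+1) - a) K q ≠ 0 := by
    intro q h1 h2
    rw [Wt]
    apply mul_ne_zero
    · rw [Finset.prod_ne_zero_iff]
      intro m hm
      simp only [Finset.mem_range] at hm
      exact hyne m q hm h2
    · rw [Finset.prod_ne_zero_iff]
      intro n hn
      simp only [Finset.mem_Icc] at hn
      exact hyne q n hn.1 hn.2
  have hPne : (∏ n ∈ Finset.Icc 1 K, (x (n+1) - a)) ≠ 0 := by
    rw [Finset.prod_ne_zero_iff]
    intro n hn
    simp only [Finset.mem_Icc] at hn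
    rw [← hx1]
    exact sub_ne_zero_of_ne (hxne 1 (n+1) (by omega) (by omega))
  -- the Wt recursions
  have hW1 : Wt x (K+1) 1 = a * ∏ n ∈ Finset.Icc 1 K, (x (n+1) - a) := by
    rw [Wt, Finset.range_one, Finset.prod_singleton, hx0, sub_zero, hx1,
      Icc_shift_prod (fun n => x n - a) 1 K]
  have hWs : ∀ q, 1 ≤ q → q ≤ K →
      Wt x (K+1) (q+1) = x (q+1) * Wt (fun p => x (p+1) - a) K q := by
    intro q h1 h2
    rw [Wt, Wt, Finset.prod_range_succ', hx0, sub_zero,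
      show (q+1+1) = (q+1)+1 from rfl, Icc_shift_prod (fun n => x n - x (q+1)) (q+1) K]
    have e1 : ∀ m, x (q+1) - x (m+1) = (x (q+1) - a) - (x (m+1) - a) := by intro m; ring
    have e2 : ∀ n, x (n+1) - x (q+1) = (x (n+1) - a) - (x (q+1) - a) := by intro n; ring
    rw [Finset.prod_congr rfl fun m _ => e1 m, Finset.prod_congr rfl fun n _ => e2 n]
    ring
  -- continuity / integrability
  have hcont : ∀ c : ℂ, Continuous fun s : ℝ => Complex.exp (c * s) :=
    fun c => Complex.continuous_exp.comp (continuous_const.mul Complex.continuous_ofReal)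
  have hI : ∀ c : ℂ, c ≠ 0 →
      (∫ s in (0:ℝ)..t, Complex.exp (c * s)) = (Complex.exp (c * t) - 1)/c := by
    intro c hc
    rw [integral_exp_mul_complex hc, Complex.ofReal_zero, mul_zero, Complex.exp_zero]
  -- rewrite the integrand
  have hint : ∀ s : ℝ, Complex.exp (-a * s) *
      ((∏ n ∈ Finset.Icc 1 K, (x (n+1) - a))⁻¹ +
        ∑ q ∈ Finset.Icc 1 K, (-1:ℂ)^q * Complex.exp (-(s:ℂ) * (x (q+1) - a)) /
          Wt (fun p => x (p+1) - a) K q)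
      = (∏ n ∈ Finset.Icc 1 K, (x (n+1) - a))⁻¹ * Complex.exp (-a * s) +
        ∑ q ∈ Finset.Icc 1 K, ((-1:ℂ)^q / Wt (fun p => x (p+1) - a) K q) *
          Complex.exp (-(x (q+1)) * s) := by
    intro s
    rw [mul_add, Finset.mul_sum]
    congr 1
    · ring
    refine Finset.sum_congr rfl fun q hq => ?_
    rw [show (-(x (q+1)) : ℂ) * s = (-a * s) + (-(s:ℂ) * (x (q+1) - a)) by ring,
      Complex.exp_add]
    ring
  rw [intervalIntegral.integral_congr (g := fun s : ℝ =>
      (∏ n ∈ Finset.Icc 1 K, (x (n+1) - a))⁻¹ * Complex.exp (-a * s) +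
        ∑ q ∈ Finset.Icc 1 K, ((-1:ℂ)^q / Wt (fun p => x (p+1) - a) K q) *
          Complex.exp (-(x (q+1)) * s)) (fun s _ => hint s)]
  rw [intervalIntegral.integral_add
      (f := fun s : ℝ => (∏ n ∈ Finset.Icc 1 K, (x (n+1) - a))⁻¹ * Complex.exp (-a * s))
      (g := fun s : ℝ => ∑ q ∈ Finset.Icc 1 K, ((-1:ℂ)^q / Wt (fun p => x (p+1) - a) K q) *
            Complex.exp (-(x (q+1)) * s))
      ((continuous_const.mul (hcont (-a))).intervalIntegrable _ _)
      ((continuous_finset_sum _ (fun q _ =>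
        continuous_const.mul (hcont (-(x (q+1)))))).intervalIntegrable _ _)]
  rw [intervalIntegral.integral_const_mul, hI (-a) (neg_ne_zero.mpr ha)]
  rw [intervalIntegral.integral_finset_sum
      (f := fun q (s : ℝ) => ((-1:ℂ)^q / Wt (fun p => x (p+1) - a) K q) *
            Complex.exp (-(x (q+1)) * s)) (fun q hq =>
      (continuous_const.mul (hcont (-(x (q+1))))).intervalIntegrable _ _)]
  rw [Finset.sum_congr rfl (fun q hq => by
    rw [intervalIntegral.integral_const_mul,
      hI (-(x (q+1))) (neg_ne_zero.mpr (hxq q (Finset.mem_Icc.mp hq).2))])]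
  -- now the right-hand side
  have hstar := star x (K+1) (by omega) hxne
  rw [show (∏ n ∈ Finset.Icc 1 (K+1), x n) = ∏ n ∈ Finset.Icc 1 (K+1), (x n - x 0) from
    Finset.prod_congr rfl fun n _ => by rw [hx0, sub_zero], ← hstar, ← Finset.sum_add_distrib]
  have h1mem : (1:ℕ) ∈ Finset.Icc 1 (K+1) := by simp
  rw [← Finset.add_sum_erase _ _ h1mem,
    show (Finset.Icc 1 (K+1)).erase 1 = Finset.Icc 2 (K+1) from by
      ext i
      simp only [Finset.mem_erase, Finset.mem_Icc]
      omega,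
    show (2:ℕ) = 1 + 1 from rfl, Icc_shift_sum _ 1 K]
  congr 1
  · -- first term
    rw [hW1, hx1, show (-(t:ℂ)) * a = -a * t by ring]
    field_simp
    ring
  · refine Finset.sum_congr rfl fun q hq => ?_
    simp only [Finset.mem_Icc] at hq
    rw [hWs q hq.1 hq.2, show (-(t:ℂ)) * x (q+1) = -(x (q+1)) * t by ring]
    have h1 := hWyne q hq.1 hq.2
    have h2 := hxq q hq.2
    field_simp
    ring

lemma mainA (g : List ℂ)
    (hg : ∀ m q, m < q → q ≤ g.length → (g.take q).sum ≠ (g.take m).sum) :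
    ∀ t : ℝ, nestedInt g t =
      (∏ n ∈ Finset.Icc 1 g.length, (g.take n).sum)⁻¹ +
      ∑ q ∈ Finset.Icc 1 g.length, (-1:ℂ)^q *
        Complex.exp (-(t:ℂ) * (g.take q).sum) /
          Wt (fun p => (g.take p).sum) g.length q := by
  induction g with
  | nil => intro t; simp [nestedInt]
  | cons a l ih =>
    intro t
    have hgl : ∀ m q, m < q → q ≤ l.length → (l.take q).sum ≠ (l.take m).sum := by
      intro m q hmq hq h
      refine hg (m+1) (q+1) (by omega) (by simp; omega) ?_
      simp only [List.take_succ_cons, List.sum_cons, h]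
    have key : ∀ n : ℕ, (l.take n).sum = ((a :: l).take (n+1)).sum - a := by
      intro n
      simp only [List.take_succ_cons, List.sum_cons]
      ring
    have ihx : ∀ s : ℝ, nestedInt l s =
        (∏ n ∈ Finset.Icc 1 l.length, (((a :: l).take (n+1)).sum - a))⁻¹ +
        ∑ q ∈ Finset.Icc 1 l.length, (-1:ℂ)^q *
          Complex.exp (-(s:ℂ) * (((a :: l).take (q+1)).sum - a)) /
            Wt (fun p => ((a :: l).take (p+1)).sum - a) l.length q := by
      intro s
      rw [ih hgl s]
      simp only [key]
    have hx0 : ((a :: l).take 0).sum = 0 := by simp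
    have hx1 : ((a :: l).take 1).sum = a := by simp
    have hxne : ∀ m q, m < q → q ≤ l.length + 1 →
        ((a :: l).take q).sum ≠ ((a :: l).take m).sum := by
      intro m q hmq hq
      exact hg m q hmq (by simpa using hq)
    calc nestedInt (a :: l) t
        = ∫ s in (0:ℝ)..t, Complex.exp (-a * s) * nestedInt l s := rfl
      _ = ∫ s in (0:ℝ)..t, Complex.exp (-a * s) *
          ((∏ n ∈ Finset.Icc 1 l.length, (((a :: l).take (n+1)).sum - a))⁻¹ +
            ∑ q ∈ Finset.Icc 1 l.length, (-1:ℂ)^q *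
              Complex.exp (-(s:ℂ) * (((a :: l).take (q+1)).sum - a)) /
                Wt (fun p => ((a :: l).take (p+1)).sum - a) l.length q) :=
          intervalIntegral.integral_congr fun s _ => by rw [ihx s]
      _ = _ := by
          have := step l.length a (fun p => ((a :: l).take p).sum) hx0 hx1 hxne t
          simp only [List.length_cons]
          exact this

lemma Icc_one_prod (f : ℕ → ℂ) (p : ℕ) :
    ∏ m ∈ Finset.Icc 1 p, f m = ∏ m ∈ Finset.range p, f (m+1) := by
  induction p with
  | zero => simp
  | succ n ih => rw [Finset.prod_range_succ, ← ih, Finset.prod_Icc_succ_top (by omega)]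

/-- explicit value of the iterated time-ordered integral of
`exp(-Σ_{j=1}^k γ_j t_j)` over the simplex `0 ≤ t_k ≤ ⋯ ≤ t_1 ≤ t`, provided all
consecutive sums `Σ_{i=a}^b γ_i` (for `1 ≤ a ≤ b ≤ k`) are nonzero. -/
theorem stmt1 (k : ℕ) (hk : 1 ≤ k) (γ : ℕ → ℂ)
    (hγ : ∀ a b, 1 ≤ a → a ≤ b → b ≤ k → ∑ i ∈ Finset.Icc a b, γ i ≠ 0)
    (t : ℝ) :
    nestedInt ((List.range k).map fun j => γ (j + 1)) t =
      (∏ n ∈ Finset.Icc 1 k, ∑ j ∈ Finset.Icc 1 n, γ j)⁻¹ +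
      ∑ p ∈ Finset.Icc 1 k, (-1 : ℂ) ^ p *
        Complex.exp (-(t : ℂ) * ∑ i ∈ Finset.Icc 1 p, γ i) /
        ((∏ m ∈ Finset.Icc 1 p, ∑ i ∈ Finset.Icc m p, γ i) *
         (∏ n ∈ Finset.Icc (p + 1) k, ∑ j ∈ Finset.Icc (p + 1) n, γ j)) := by
  set g : List ℂ := (List.range k).map fun j => γ (j + 1) with hgdef
  have hlen : g.length = k := by simp [hgdef]
  -- prefix sums
  have hsum : ∀ q, q ≤ k → (g.take q).sum = ∑ i ∈ Finset.Icc 1 q, γ i := by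
    intro q hq
    induction q with
    | zero => simp
    | succ n ih =>
      rw [List.sum_take_succ _ _ (by omega : n < g.length), ih (by omega),
        Finset.sum_Icc_succ_top (by omega)]
      congr 1
      simp [hgdef]
  -- difference of prefix sums is a consecutive sum
  have hdiff : ∀ m q, m < q → q ≤ k →
      (g.take q).sum - (g.take m).sum = ∑ i ∈ Finset.Icc (m+1) q, γ i := by
    intro m q hmq hq
    rw [hsum q hq, hsum m (by omega)]
    have hu : Finset.Icc 1 q = Finset.Icc 1 m ∪ Finset.Icc (m+1) q := by
      ext i
      simp only [Finset.mem_Icc, Finset.mem_union]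
      omega
    have hd : Disjoint (Finset.Icc 1 m) (Finset.Icc (m+1) q) := by
      rw [Finset.disjoint_left]
      intro i hi hi'
      simp only [Finset.mem_Icc] at hi hi'
      omega
    rw [hu, Finset.sum_union hd]
    ring
  have hg : ∀ m q, m < q → q ≤ g.length → (g.take q).sum ≠ (g.take m).sum := by
    intro m q hmq hq h
    rw [hlen] at hq
    have := hdiff m q hmq hq
    rw [h, sub_self] at this
    exact hγ (m+1) q (by omega) (by omega) hq this.symm
  rw [mainA g hg t, hlen]
  congr 1
  · congr 1
    refine Finset.prod_congr rfl fun n hn => ?_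
    simp only [Finset.mem_Icc] at hn
    rw [hsum n hn.2]
  · refine Finset.sum_congr rfl fun q hq => ?_
    simp only [Finset.mem_Icc] at hq
    rw [hsum q hq.2]
    congr 1
    rw [Wt]
    congr 1
    · rw [Icc_one_prod (fun m => ∑ i ∈ Finset.Icc m q, γ i) q]
      refine Finset.prod_congr rfl fun m hm => ?_
      simp only [Finset.mem_range] at hm
      rw [← hdiff m q hm hq.2]
    · refine Finset.prod_congr rfl fun n hn => ?_
      simp only [Finset.mem_Icc] at hn
      rw [← hdiff q n hn.1 hn.2]
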